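/- Suppose U: ℝ^d → ℝ is four times differentiable with |∇³U(x)[u,v,w]| ≤ C₃‖X^⊤u‖_∞‖X^⊤v‖_∞‖w‖₂ and |∇⁴U(x)[u,u,u,u]| ≤ C₄‖X^⊤u‖_∞⁴ for all x,u,v,w. Then for any q, p ∈ ℝ^d and τ > 0: |p^⊤[∇²U(q) − ∇²U(q + τp)]p| ≤ τ·C₃·‖X^⊤p‖_∞²·‖p‖₂ + τ²·C₄·‖X^⊤p‖_∞⁴. -/

import Mathlib

open scoped RealInnerProductSpace

/-- **Hessian quadratic-form variation bound from third- and fourth-order regularity.**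
If `|∇³U(x)[u,v,w]| ≤ C₃ ‖X⊤u‖_∞ ‖X⊤v‖_∞ ‖w‖` and
`|∇⁴U(x)[u,u,u,u]| ≤ C₄ ‖X⊤u‖_∞⁴`, then for any `q, p` and `τ > 0`,
`|p⊤[∇²U(q) − ∇²U(q + τp)]p| ≤ τ C₃ ‖X⊤p‖_∞² ‖p‖ + τ² C₄ ‖X⊤p‖_∞⁴`. -/
theorem hessian_quadratic_variation_bound
    {d r : ℕ} (U : EuclideanSpace ℝ (Fin d) → ℝ) (hU : ContDiff ℝ 4 U)
    (C₃ C₄ : ℝ) (X : Fin r → EuclideanSpace ℝ (Fin d)) (hX : ∀ i, ‖X i‖ = 1)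
    (h3 : ∀ x u v w : EuclideanSpace ℝ (Fin d),
      |iteratedFDeriv ℝ 3 U x ![u, v, w]| ≤
        C₃ * (⨆ i : Fin r, |⟪X i, u⟫|) * (⨆ i : Fin r, |⟪X i, v⟫|) * ‖w‖)
    (h4 : ∀ x u : EuclideanSpace ℝ (Fin d),
      |iteratedFDeriv ℝ 4 U x ![u, u, u, u]| ≤ C₄ * (⨆ i : Fin r, |⟪X i, u⟫|) ^ 4)
    (q p : EuclideanSpace ℝ (Fin d)) (τ : ℝ) (hτ : 0 < τ) :
    |iteratedFDeriv ℝ 2 U q ![p, p] - iteratedFDeriv ℝ 2 U (q + τ • p) ![p, p]| ≤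
      τ * C₃ * (⨆ i : Fin r, |⟪X i, p⟫|) ^ 2 * ‖p‖
        + τ ^ 2 * C₄ * (⨆ i : Fin r, |⟪X i, p⟫|) ^ 4 := by
  set M : ℝ := ⨆ i : Fin r, |⟪X i, p⟫| with hM
  -- the scalar function along the segment
  set F : ℝ → ℝ := fun t => iteratedFDeriv ℝ 2 U (q + t • p) ![p, p] with hF
  set F' : ℝ → ℝ := fun t => iteratedFDeriv ℝ 3 U (q + t • p) ![p, p, p] with hF'
  have hD2 : ContDiff ℝ 1 (iteratedFDeriv ℝ 2 U) :=
    hU.iteratedFDeriv_right (by norm_num)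
  have hderiv : ∀ t : ℝ, HasDerivAt F (F' t) t := by
    intro t
    have hγ : HasDerivAt (fun s : ℝ => q + s • p) p t := by
      simpa using ((hasDerivAt_id t).smul_const p).const_add q
    have h1 : HasFDerivAt (iteratedFDeriv ℝ 2 U)
        (fderiv ℝ (iteratedFDeriv ℝ 2 U) (q + t • p)) (q + t • p) :=
      ((hD2.differentiable one_ne_zero) (q + t • p)).hasFDerivAt
    have h2 : HasDerivAt (fun s : ℝ => iteratedFDeriv ℝ 2 U (q + s • p))
        (fderiv ℝ (iteratedFDeriv ℝ 2 U) (q + t • p) p) t :=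
      h1.comp_hasDerivAt t hγ
    have h3' := ((ContinuousMultilinearMap.apply ℝ
        (fun _ : Fin 2 => EuclideanSpace ℝ (Fin d)) ℝ ![p, p]).hasFDerivAt).comp_hasDerivAt t h2
    exact h3'
  have hbound : ∀ t : ℝ, |F' t| ≤ C₃ * M * M * ‖p‖ := fun t => h3 _ p p p
  have key : |F τ - F 0| ≤ (C₃ * M * M * ‖p‖) * |τ - 0| := by
    have := convex_univ.norm_image_sub_le_of_norm_hasDerivWithin_le
      (f := F) (f' := F') (s := Set.univ) (x := (0:ℝ)) (y := τ)
      (fun x _ => (hderiv x).hasDerivWithinAt) (fun x _ => hbound x)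
      (Set.mem_univ _) (Set.mem_univ _)
    simpa using this
  have hF0 : F 0 = iteratedFDeriv ℝ 2 U q ![p, p] := by simp [hF]
  have hFτ : F τ = iteratedFDeriv ℝ 2 U (q + τ • p) ![p, p] := rfl
  have h2nd : 0 ≤ τ ^ 2 * C₄ * M ^ 4 := by
    have := (abs_nonneg _).trans (h4 q p)
    nlinarith [mul_nonneg (sq_nonneg τ) this]
  calc |iteratedFDeriv ℝ 2 U q ![p, p] - iteratedFDeriv ℝ 2 U (q + τ • p) ![p, p]|
      = |F τ - F 0| := by rw [hF0, hFτ, abs_sub_comm]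
    _ ≤ (C₃ * M * M * ‖p‖) * |τ - 0| := key
    _ = τ * C₃ * M ^ 2 * ‖p‖ := by
        rw [sub_zero, abs_of_pos hτ]; ring
    _ ≤ τ * C₃ * M ^ 2 * ‖p‖ + τ ^ 2 * C₄ * M ^ 4 := le_add_of_nonneg_right h2nd
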